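/- Let M = (m_{ij})_{i,j≥1} be a nuclear matrix over C_p, q = p^a, g an automorphism fixing the valuation, and k ≥ 1. Let C_k be the coefficient of T^k in det(1 − (M^{g^{a-1}}⋯M^g M)T). Let 𝒜 be the set of k×k submatrices of M contained in the first k rows, ℬ the set of all other k×k submatrices, t_𝒜 = inf_{W∈𝒜} ord_p det W, t_ℬ = inf_{W∈ℬ} ord_p det W, and M^{[k]} the upper-left k×k submatrix. If 2·ord_p det M^{[k]} < t_𝒜 + t_ℬ, then ord_q C_k = ord_p det M^{[k]}, where ord_q = ord_p / a. -/

import Mathlib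

open Matrix Finset

lemma wt_lt_add_of_lt_of_le {r s : ℝ} {x y : WithTop ℝ} (hx : ↑r < x) (hy : ↑s ≤ y) :
    ((r + s : ℝ) : WithTop ℝ) < x + y := by
  rw [WithTop.coe_add]
  exact WithTop.add_lt_add_of_lt_of_le (WithTop.coe_ne_top) hx hy

lemma wt_lt_add_of_le_of_lt {r s : ℝ} {x y : WithTop ℝ} (hx : ↑r ≤ x) (hy : ↑s < y) :
    ((r + s : ℝ) : WithTop ℝ) < x + y := by
  rw [add_comm r s, add_comm x y]; exact wt_lt_add_of_lt_of_le hy hx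

lemma wt_le_add {r s : ℝ} {x y : WithTop ℝ} (hx : ↑r ≤ x) (hy : ↑s ≤ y) :
    ((r + s : ℝ) : WithTop ℝ) ≤ x + y := by
  rw [WithTop.coe_add]; exact add_le_add hx hy

lemma v_sum_lt {K : Type*} [Field K] (v : K → WithTop ℝ) (hv0 : v 0 = ⊤)
    (hvadd : ∀ x y : K, min (v x) (v y) ≤ v (x + y))
    {ι : Type*} (s : Finset ι) (f : ι → K) {r : ℝ}
    (h : ∀ i ∈ s, (r : WithTop ℝ) < v (f i)) : (r : WithTop ℝ) < v (∑ i ∈ s, f i) := by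
  classical
  induction s using Finset.cons_induction with
  | empty => rw [Finset.sum_empty, hv0]; exact WithTop.coe_lt_top r
  | cons i s his ih =>
    rw [Finset.sum_cons]
    refine lt_of_lt_of_le ?_ (hvadd _ _)
    exact lt_min (h i (Finset.mem_cons_self _ _)) (ih fun j hj => h j (Finset.mem_cons_of_mem hj))

lemma v_sum_le {K : Type*} [Field K] (v : K → WithTop ℝ) (hv0 : v 0 = ⊤)
    (hvadd : ∀ x y : K, min (v x) (v y) ≤ v (x + y))
    {ι : Type*} (s : Finset ι) (f : ι → K) {r : WithTop ℝ}
    (h : ∀ i ∈ s, r ≤ v (f i)) : r ≤ v (∑ i ∈ s, f i) := by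
  classical
  induction s using Finset.cons_induction with
  | empty => rw [Finset.sum_empty, hv0]; exact le_top
  | cons i s his ih =>
    rw [Finset.sum_cons]
    refine le_trans ?_ (hvadd _ _)
    exact le_min (h i (Finset.mem_cons_self _ _)) (ih fun j hj => h j (Finset.mem_cons_of_mem hj))



-- det (1 + A) = sum over subsets of principal minors
lemma det_one_add_sum {R : Type*} [CommRing R] {n : ℕ} (A : Matrix (Fin n) (Fin n) R) :
    (1 + A).det = ∑ s : Finset (Fin n),
      (A.submatrix (fun i : {x // x ∈ s} => (i : Fin n)) (fun j : {x // x ∈ s} => (j : Fin n))).det := by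
  classical
  have key := MultilinearMap.map_add_univ
    ((Matrix.detRowAlternating (R := R) (n := Fin n)).toMultilinearMap)
    (fun i => A i) (fun i => (1 : Matrix (Fin n) (Fin n) R) i)
  have h1 : (1 + A).det
      = (Matrix.detRowAlternating (R := R) (n := Fin n)).toMultilinearMap
        ((fun i => A i) + (fun i => (1 : Matrix (Fin n) (Fin n) R) i)) := by
    rw [add_comm]; rfl
  rw [h1, key]
  refine Finset.sum_congr rfl fun s _ => ?_
  set Ms : Matrix (Fin n) (Fin n) R :=
    Matrix.of fun i j => if i ∈ s then A i j else (1 : Matrix (Fin n) (Fin n) R) i j with hMs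
  have h2 : (s.piecewise (fun i => A i) (fun i => (1 : Matrix (Fin n) (Fin n) R) i))
      = fun i => Ms i := by
    funext i j
    by_cases h : i ∈ s <;> simp [Finset.piecewise, h, Ms]
  rw [h2]
  have h2' : (Matrix.detRowAlternating (R := R) (n := Fin n)).toMultilinearMap
      (fun i => Ms i) = Ms.det := rfl
  rw [h2']
  rw [← Matrix.det_submatrix_equiv_self (Equiv.sumCompl (· ∈ s)) Ms]
  have h3 : Ms.submatrix ⇑(Equiv.sumCompl (· ∈ s)) ⇑(Equiv.sumCompl (· ∈ s)) = Matrix.fromBlocks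
      (A.submatrix (fun i : {x // x ∈ s} => (i : Fin n)) (fun j : {x // x ∈ s} => (j : Fin n)))
      (A.submatrix (fun i : {x // x ∈ s} => (i : Fin n)) (fun j : {x // ¬ x ∈ s} => (j : Fin n)))
      0 1 := by
    ext i j
    rcases i with i | i <;> rcases j with j | j
    · simp [Ms, i.2]
    · simp [Ms, i.2]
    · have hne : (i : Fin n) ≠ (j : Fin n) := by
        intro hij
        exact i.2 (hij ▸ j.2)
      simp [Ms, i.2, Matrix.one_apply_ne hne]
    · have hiff : ((i : Fin n) = (j : Fin n)) ↔ i = j := Subtype.val_injective.eq_iff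
      simp [Ms, i.2, Matrix.one_apply, hiff]
  rw [h3, Matrix.det_fromBlocks_zero₂₁]
  simp

lemma wt_nsmul_coe (r : ℝ) (m : ℕ) : m • ((r : WithTop ℝ)) = ((m * r : ℝ) : WithTop ℝ) := by
  induction m with
  | zero => simp
  | succ b ih =>
    rw [succ_nsmul, ih, ← WithTop.coe_add]
    congr 1
    push_cast
    ring
lemma wt_self_add_eq_zero (x : WithTop ℝ) (h : x + x = 0) : x = 0 := by
  induction x using WithTop.recTopCoe with
  | top => simp at h
  | coe x =>
    have h2 : ((x + x : ℝ) : WithTop ℝ) = ((0:ℝ) : WithTop ℝ) := by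
      rw [WithTop.coe_add]; exact h
    rw [WithTop.coe_eq_coe] at h2
    have : x = 0 := by linarith
    rw [this]; rfl

open Equiv Finset Matrix

instance strictMono_dec {k n : ℕ} (f : Fin k → Fin n) : Decidable (StrictMono f) :=
  decidable_of_iff (∀ i j, i < j → f i < f j)
    (by constructor; exact fun h a b => h a b; exact fun h a b => @h a b)

/-- The finset of strictly monotone maps `Fin k → Fin n`. -/
def monos (k n : ℕ) : Finset (Fin k → Fin n) :=
  Finset.univ.filter fun f => StrictMono f

lemma mem_monos {k n : ℕ} {f : Fin k → Fin n} : f ∈ monos k n ↔ StrictMono f := by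
  simp [monos]

lemma cb_aux {R : Type*} [CommRing R] {k n : ℕ} (A : Matrix (Fin k) (Fin n) R)
    (B : Matrix (Fin n) (Fin k) R) {p : Fin k → Fin n} (H : ¬Function.Injective p) :
    (∑ σ : Perm (Fin k), ((Perm.sign σ : ℤ) : R) * ∏ x, A (σ x) (p x) * B (p x) x) = 0 := by
  obtain ⟨i, j, hpij, hij⟩ : ∃ i j, p i = p j ∧ i ≠ j := by
    rw [Function.Injective] at H
    push_neg at H
    obtain ⟨i, j, h1, h2⟩ := H
    exact ⟨i, j, h1, h2⟩
  exact Finset.sum_involution (fun σ _ => σ * Equiv.swap i j)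
    (fun σ _ => by
      have : (∏ x, A (σ x) (p x)) = ∏ x, A ((σ * Equiv.swap i j) x) (p x) :=
        Fintype.prod_equiv (swap i j) _ _ (by simp [apply_swap_eq_self hpij])
      simp [this, Perm.sign_swap hij, prod_mul_distrib])
    (fun σ _ _ => (not_congr mul_swap_eq_iff).mpr hij) (fun _ _ => mem_univ _)
    fun σ _ => mul_swap_involutive i j σ

/-- Uniqueness of the monotone–permutation factorization. -/
lemma mono_perm_unique {k n : ℕ} {t t' : Fin k → Fin n} (ht : StrictMono t)
    (ht' : StrictMono t') {τ τ' : Perm (Fin k)} (h : t ∘ ⇑τ = t' ∘ ⇑τ') :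
    t = t' ∧ τ = τ' := by
  have hr : Set.range t = Set.range t' := by
    have h1 := τ.surjective.range_comp t
    have h2 := τ'.surjective.range_comp t'
    rw [← h1, h, h2]
  have htt : t = t' := (StrictMono.range_inj ht ht').mp hr
  subst htt
  exact ⟨rfl, Equiv.ext fun x => ht.injective (congrFun h x)⟩

theorem cauchy_binet {R : Type*} [CommRing R] {k n : ℕ} (A : Matrix (Fin k) (Fin n) R)
    (B : Matrix (Fin n) (Fin k) R) :
    (A * B).det = ∑ t ∈ monos k n, (A.submatrix id t).det * (B.submatrix t id).det := by
  classical
  have step1 : (A * B).det = ∑ p : Fin k → Fin n,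
      ∑ σ : Perm (Fin k), ((Perm.sign σ : ℤ) : R) * ∏ i, A (σ i) (p i) * B (p i) i := by
    simp only [det_apply', mul_apply, prod_univ_sum, mul_sum, Fintype.piFinset_univ]
    rw [Finset.sum_comm]
  have step2 : ∑ p : Fin k → Fin n,
        ∑ σ : Perm (Fin k), ((Perm.sign σ : ℤ) : R) * ∏ i, A (σ i) (p i) * B (p i) i
      = ∑ p ∈ Finset.univ.filter (fun p : Fin k → Fin n => Function.Injective p),
        ∑ σ : Perm (Fin k), ((Perm.sign σ : ℤ) : R) * ∏ i, A (σ i) (p i) * B (p i) i := by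
    refine (Finset.sum_subset (Finset.filter_subset _ _) fun p _ hp => ?_).symm
    refine cb_aux A B fun hinj => hp ?_
    simp [hinj]
  -- reindex injective maps by pairs (monotone, permutation)
  have step3 : ∑ p ∈ Finset.univ.filter (fun p : Fin k → Fin n => Function.Injective p),
        ∑ σ : Perm (Fin k), ((Perm.sign σ : ℤ) : R) * ∏ i, A (σ i) (p i) * B (p i) i
      = ((monos k n) ×ˢ (Finset.univ : Finset (Perm (Fin k)))).sum
        (fun q : (Fin k → Fin n) × Perm (Fin k) =>
        ∑ σ : Perm (Fin k), ((Perm.sign σ : ℤ) : R)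
          * ∏ i, A (σ i) ((q.1 ∘ ⇑q.2) i) * B ((q.1 ∘ ⇑q.2) i) i) := by
    refine (Finset.sum_bij (fun (q : (Fin k → Fin n) × Perm (Fin k)) _ => q.1 ∘ ⇑q.2) ?_ ?_ ?_ ?_).symm
    · rintro ⟨t, τ⟩ hq
      rw [Finset.mem_product] at hq
      have ht : StrictMono t := mem_monos.mp hq.1
      simp only [Finset.mem_filter, Finset.mem_univ, true_and]
      exact ht.injective.comp τ.injective
    · rintro ⟨t, τ⟩ hq ⟨t', τ'⟩ hq' h
      rw [Finset.mem_product] at hq hq'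
      obtain ⟨h1, h2⟩ := mono_perm_unique (mem_monos.mp hq.1) (mem_monos.mp hq'.1) h
      exact Prod.ext h1 h2
    · intro p hp
      have hpinj : Function.Injective p := by
        simpa using (Finset.mem_filter.mp hp).2
      set S : Finset (Fin n) := Finset.univ.image p with hS
      have hcard : S.card = k := by
        rw [hS, Finset.card_image_of_injective _ hpinj, Finset.card_univ, Fintype.card_fin]
      set t : Fin k → Fin n := ⇑(S.orderEmbOfFin hcard) with htdef
      have ht : StrictMono t := (S.orderEmbOfFin hcard).strictMono
      have hmem : ∀ i, p i ∈ S := fun i => by simp [hS]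
      set u : Fin k → Fin k := fun i => (S.orderIsoOfFin hcard).symm ⟨p i, hmem i⟩ with hu
      have huinj : Function.Injective u := by
        intro i₁ i₂ h12
        have := (S.orderIsoOfFin hcard).symm.injective h12
        exact hpinj (by simpa [Subtype.ext_iff] using this)
      have hubij : Function.Bijective u := Finite.injective_iff_bijective.mp huinj
      refine ⟨⟨t, Equiv.ofBijective u hubij⟩, ?_, ?_⟩
      · rw [Finset.mem_product]
        exact ⟨mem_monos.mpr ht, Finset.mem_univ _⟩
      · funext i
        show t (u i) = p i
        have : t (u i) = ((S.orderIsoOfFin hcard) ((S.orderIsoOfFin hcard).symm ⟨p i, hmem i⟩) : Fin n) := rfl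
        rw [this, OrderIso.apply_symm_apply]
    · intro q hq
      rfl
  -- evaluate the inner sums
  have step4 : ∀ t ∈ monos k n, ∀ τ : Perm (Fin k),
      (∑ σ : Perm (Fin k), ((Perm.sign σ : ℤ) : R)
          * ∏ i, A (σ i) ((t ∘ ⇑τ) i) * B ((t ∘ ⇑τ) i) i)
      = (A.submatrix id t).det * (((Perm.sign τ : ℤ) : R) * ∏ i, B (t (τ i)) i) := by
    intro t _ τ
    have reindex : ∀ σ : Perm (Fin k),
        ((Perm.sign σ : ℤ) : R) * ∏ i, A (σ i) ((t ∘ ⇑τ) i) * B ((t ∘ ⇑τ) i) i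
        = (((Perm.sign (σ * τ⁻¹) : ℤ) : R) * ∏ i, A ((σ * τ⁻¹) i) (t i))
          * (((Perm.sign τ : ℤ) : R) * ∏ i, B (t (τ i)) i) := by
      intro σ
      have hsign : ((Perm.sign σ : ℤ) : R)
          = ((Perm.sign (σ * τ⁻¹) : ℤ) : R) * ((Perm.sign τ : ℤ) : R) := by
        rw [← Int.cast_mul]
        congr 1
        rw [← Units.val_mul]
        congr 1
        rw [← Perm.sign_mul, inv_mul_cancel_right]
      have hprod : ∏ i, A (σ i) ((t ∘ ⇑τ) i) * B ((t ∘ ⇑τ) i) i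
          = (∏ i, A ((σ * τ⁻¹) i) (t i)) * ∏ i, B (t (τ i)) i := by
        rw [Finset.prod_mul_distrib]
        congr 1
        rw [← Equiv.prod_comp τ (fun j => A ((σ * τ⁻¹) j) (t j))]
        refine Finset.prod_congr rfl fun i _ => ?_
        simp [Perm.mul_apply]
      rw [hsign, hprod]; ring
    rw [Finset.sum_congr rfl fun σ _ => reindex σ]
    rw [← Finset.sum_mul]
    congr 1
    rw [det_apply']
    exact Fintype.sum_equiv (Equiv.mulRight τ⁻¹) _ _ (fun σ => by simp [submatrix])
  rw [step1, step2, step3]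
  rw [Finset.sum_product]
  refine Finset.sum_congr rfl fun t ht => ?_
  rw [Finset.sum_congr rfl fun τ _ => step4 t ht τ, ← Finset.mul_sum]
  congr 1
  rw [det_apply']
  refine Finset.sum_congr rfl fun τ _ => ?_
  simp [submatrix]


open Polynomial
lemma det_mul_submatrix {R : Type*} [CommRing R] {k n : ℕ} (A P : Matrix (Fin n) (Fin n) R)
    (r c : Fin k → Fin n) :
    ((A * P).submatrix r c).det
      = ∑ t ∈ monos k n, (A.submatrix r t).det * (P.submatrix t c).det := by
  have h : (A * P).submatrix r c = (A.submatrix r id) * (P.submatrix id c) := by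
    ext i j
    simp [Matrix.mul_apply, Matrix.submatrix_apply]
  rw [h, cauchy_binet]
  refine Finset.sum_congr rfl fun t _ => ?_
  rw [Matrix.submatrix_submatrix, Matrix.submatrix_submatrix]
  simp [Function.comp]

lemma coeff_det_one_sub {K : Type*} [Field K] {n : ℕ} (N : Matrix (Fin n) (Fin n) K) (k : ℕ) :
    (Matrix.det (1 - (Polynomial.X : Polynomial K) • (N.map Polynomial.C))).coeff k
      = (-1 : K)^k * ∑ t ∈ monos k n, (N.submatrix t t).det := by
  classical
  have h1 : (1 - (Polynomial.X : Polynomial K) • (N.map Polynomial.C))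
      = 1 + ((-Polynomial.X : Polynomial K) • (N.map Polynomial.C)) := by
    rw [neg_smul, ← sub_eq_add_neg]
  rw [h1, det_one_add_sum]
  rw [Polynomial.finset_sum_coeff]
  have h2 : ∀ s : Finset (Fin n),
      ((((-Polynomial.X : Polynomial K) • (N.map Polynomial.C)).submatrix
        (fun i : {x // x ∈ s} => (i : Fin n)) (fun j : {x // x ∈ s} => (j : Fin n))).det).coeff k
      = if s.card = k then (-1 : K)^k * (N.submatrix
        (fun i : {x // x ∈ s} => (i : Fin n)) (fun j : {x // x ∈ s} => (j : Fin n))).det else 0 := by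
    intro s
    have e1 : (((-Polynomial.X : Polynomial K) • (N.map Polynomial.C)).submatrix
        (fun i : {x // x ∈ s} => (i : Fin n)) (fun j : {x // x ∈ s} => (j : Fin n)))
        = (-Polynomial.X : Polynomial K) • ((N.map Polynomial.C).submatrix
        (fun i : {x // x ∈ s} => (i : Fin n)) (fun j : {x // x ∈ s} => (j : Fin n))) := by
      ext i j
      simp
    rw [e1, Matrix.det_smul, Matrix.submatrix_map, ← RingHom.mapMatrix_apply,
      ← RingHom.map_det, Fintype.card_coe]
    set d : K := (N.submatrix (fun i : {x // x ∈ s} => (i : Fin n))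
      (fun j : {x // x ∈ s} => (j : Fin n))).det with hd
    have e2 : ((-Polynomial.X : Polynomial K)) ^ s.card * Polynomial.C d
        = ((-1 : K[X])^s.card) * (Polynomial.C d * Polynomial.X ^ s.card) := by
      rw [neg_pow]; ring
    rw [e2, Polynomial.C_mul_X_pow_eq_monomial]
    have e3 : ((-1 : K[X]) ^ s.card) = Polynomial.C ((-1:K)^s.card) := by
      simp
    rw [e3, Polynomial.C_mul_monomial, Polynomial.coeff_monomial]
    by_cases h : s.card = k
    · subst h; simp
    · rw [if_neg h, if_neg h]
  rw [Finset.sum_congr rfl fun s _ => h2 s]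
  rw [Finset.sum_ite, Finset.sum_const_zero, add_zero, ← Finset.mul_sum]
  congr 1
  -- bijection between subsets of card k and monotone maps
  refine (Finset.sum_bij (fun (t : Fin k → Fin n) (ht : t ∈ monos k n) => Finset.univ.image t)
    ?_ ?_ ?_ ?_).symm
  · intro t ht
    simp only [Finset.mem_filter, Finset.mem_univ, true_and]
    rw [Finset.card_image_of_injective _ (mem_monos.mp ht).injective, Finset.card_univ,
      Fintype.card_fin]
  · intro t ht t' ht' h
    have h1 : Set.range t = Set.range t' := by
      have e1 : Set.range t = ↑(Finset.univ.image t) := by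
        rw [Finset.coe_image, Finset.coe_univ, Set.image_univ]
      have e2 : Set.range t' = ↑(Finset.univ.image t') := by
        rw [Finset.coe_image, Finset.coe_univ, Set.image_univ]
      have h' : Finset.image t Finset.univ = Finset.image t' Finset.univ := by simpa using h
      rw [e1, e2, h']
    exact (StrictMono.range_inj (mem_monos.mp ht) (mem_monos.mp ht')).mp h1
  · intro u hu
    have hcard : u.card = k := by simpa using (Finset.mem_filter.mp hu).2
    refine ⟨⇑(u.orderEmbOfFin hcard), mem_monos.mpr (u.orderEmbOfFin hcard).strictMono, ?_⟩
    show Finset.image ⇑(u.orderEmbOfFin hcard) Finset.univ = u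
    refine Finset.eq_of_subset_of_card_le ?_ ?_
    · intro x hx
      rw [Finset.mem_image] at hx
      obtain ⟨i, _, rfl⟩ := hx
      exact u.orderEmbOfFin_mem hcard i
    · rw [hcard, Finset.card_image_of_injective _ (u.orderEmbOfFin hcard).injective,
        Finset.card_univ, Fintype.card_fin]
  · intro t ht
    have hcard : (Finset.univ.image t).card = k := by
      rw [Finset.card_image_of_injective _ (mem_monos.mp ht).injective, Finset.card_univ,
        Fintype.card_fin]
    have hteq : t = ⇑((Finset.univ.image t).orderEmbOfFin hcard) :=
      Finset.orderEmbOfFin_unique hcard (fun x => by simp) (mem_monos.mp ht)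
    rw [← Matrix.det_submatrix_equiv_self ((Finset.univ.image t).orderIsoOfFin hcard).toEquiv
      (N.submatrix (fun i : {x // x ∈ Finset.univ.image t} => (i : Fin n))
        (fun j : {x // x ∈ Finset.univ.image t} => (j : Fin n)))]
    rw [Matrix.submatrix_submatrix]
    have hco : ((fun i : {x // x ∈ Finset.univ.image t} => (i : Fin n))
        ∘ ⇑(((Finset.univ.image t).orderIsoOfFin hcard).toEquiv)) = t := by
      funext i
      exact (congrFun hteq i).symm
    rw [hco]

theorem stmt8 {K : Type*} [Field K] (v : K → WithTop ℝ) (hv0 : v 0 = ⊤)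
    (hvmul : ∀ x y : K, v (x * y) = v x + v y)
    (hvadd : ∀ x y : K, min (v x) (v y) ≤ v (x + y))
    (g : RingAut K) (hg : ∀ x : K, v (g x) = v x)
    (a k n : ℕ) (ha : 0 < a) (hk : 0 < k) (hkn : 2 * k ≤ n)
    (M : Matrix (Fin n) (Fin n) K)
    (tA tB : WithTop ℝ)
    (htA : tA = ⨅ rc : {x : (Fin k → Fin n) × (Fin k → Fin n) //
        StrictMono x.1 ∧ StrictMono x.2 ∧ ∀ i, (x.1 i : ℕ) < k},
      v (Matrix.det (M.submatrix rc.1.1 rc.1.2)))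
    (htB : tB = ⨅ rc : {x : (Fin k → Fin n) × (Fin k → Fin n) //
        StrictMono x.1 ∧ StrictMono x.2 ∧ ∃ i, k ≤ (x.1 i : ℕ)},
      v (Matrix.det (M.submatrix rc.1.1 rc.1.2)))
    (Mk : Matrix (Fin k) (Fin k) K)
    (hMk : Mk = M.submatrix (Fin.castLE (by omega)) (Fin.castLE (by omega)))
    (Ck : K)
    (hCk : Ck = (Matrix.det (1 - (Polynomial.X : Polynomial K) •
        ((((List.range a).map fun s => M.map ⇑(g ^ s)).reverse.prod).map Polynomial.C))).coeff k)
    (hyp : 2 • v (Matrix.det Mk) < tA + tB) :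
    v Ck = a • v (Matrix.det Mk) := by
  classical
  have hkn' : k ≤ n := by omega
  set e₀ : Fin k → Fin n := Fin.castLE hkn' with he₀
  have he₀mono : StrictMono e₀ := Fin.strictMono_castLE hkn'
  have he₀lt : ∀ i, ((e₀ i : Fin n) : ℕ) < k := fun i => i.2
  have hMk' : M.submatrix e₀ e₀ = Mk := hMk.symm
  -- v (det Mk) is finite
  have hv₀ne : v (Matrix.det Mk) ≠ ⊤ := by
    intro htop
    rw [htop] at hyp
    have : (2 : ℕ) • (⊤ : WithTop ℝ) = ⊤ := by
      rw [two_smul]; exact top_add _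
    rw [this] at hyp
    exact not_top_lt hyp
  obtain ⟨r₀, hr₀⟩ : ∃ r : ℝ, v (Matrix.det Mk) = ↑r := by
    rcases WithTop.ne_top_iff_exists.mp hv₀ne with ⟨r, hr⟩
    exact ⟨r, hr.symm⟩
  -- tA ≤ v (det Mk)
  have htAle : tA ≤ (r₀ : WithTop ℝ) := by
    calc tA ≤ v (Matrix.det (M.submatrix e₀ e₀)) := by
          rw [htA]
          exact ciInf_le (Set.Finite.bddBelow (Set.finite_range _))
            (⟨(e₀, e₀), he₀mono, he₀mono, he₀lt⟩ : {x : (Fin k → Fin n) × (Fin k → Fin n) //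
              StrictMono x.1 ∧ StrictMono x.2 ∧ ∀ i, (x.1 i : ℕ) < k})
      _ = ↑r₀ := by rw [hMk', hr₀]
  have htAne : tA ≠ ⊤ := by
    intro htop
    rw [htop] at htAle
    exact (WithTop.not_top_le_coe r₀) htAle
  obtain ⟨rA, hrA⟩ : ∃ r : ℝ, tA = ↑r := by
    rcases WithTop.ne_top_iff_exists.mp htAne with ⟨r, hr⟩
    exact ⟨r, hr.symm⟩
  have hrAr₀ : rA ≤ r₀ := by
    rw [hrA] at htAle; exact_mod_cast htAle
  -- tB > 2r₀ - rA
  have htBgt : ((2*r₀ - rA : ℝ) : WithTop ℝ) < tB := by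
    have h2 : ((r₀ + r₀ : ℝ) : WithTop ℝ) < ↑rA + tB := by
      rw [WithTop.coe_add, ← hr₀, ← hrA, ← two_smul ℕ]
      exact hyp
    induction tB using WithTop.recTopCoe with
    | top => exact WithTop.coe_lt_top _
    | coe b =>
      rw [← WithTop.coe_add, WithTop.coe_lt_coe] at h2
      rw [WithTop.coe_lt_coe]
      linarith
  -- minor bounds
  have hA_bound : ∀ r c : Fin k → Fin n, StrictMono r → StrictMono c →
      (∀ i, (r i : ℕ) < k) → (rA : WithTop ℝ) ≤ v (Matrix.det (M.submatrix r c)) := by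
    intro r c hr hc hlt
    rw [← hrA, htA]
    exact ciInf_le (Set.Finite.bddBelow (Set.finite_range _))
      (⟨(r, c), hr, hc, hlt⟩ : {x : (Fin k → Fin n) × (Fin k → Fin n) //
        StrictMono x.1 ∧ StrictMono x.2 ∧ ∀ i, (x.1 i : ℕ) < k})
  have hB_bound : ∀ r c : Fin k → Fin n, StrictMono r → StrictMono c →
      (∃ i, k ≤ (r i : ℕ)) → ((2*r₀ - rA : ℝ) : WithTop ℝ) < v (Matrix.det (M.submatrix r c)) := by
    intro r c hr hc hge
    refine lt_of_lt_of_le htBgt ?_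
    rw [htB]
    exact ciInf_le (Set.Finite.bddBelow (Set.finite_range _))
      (⟨(r, c), hr, hc, hge⟩ : {x : (Fin k → Fin n) × (Fin k → Fin n) //
        StrictMono x.1 ∧ StrictMono x.2 ∧ ∃ i, k ≤ (x.1 i : ℕ)})
  -- valuation is Galois invariant
  have vg : ∀ (s : ℕ) (x : K), v ((g^s) x) = v x := by
    intro s
    induction s with
    | zero => intro x; rfl
    | succ b ih =>
      intro x
      rw [pow_succ]
      exact (ih (g x)).trans (hg x)
  -- determinant of mapped submatrices
  have hdet : ∀ (s : ℕ) (r c : Fin k → Fin n),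
      Matrix.det ((M.map ⇑(g^s)).submatrix r c) = (g^s) (Matrix.det (M.submatrix r c)) := by
    intro s r c
    rw [Matrix.submatrix_map]
    rw [show (⇑(g^s) : K → K) = ⇑((g^s : RingAut K) : K →+* K) from rfl,
      ← RingHom.mapMatrix_apply, ← RingHom.map_det]
  -- v 1 = 0 and v (-x) = v x
  have hv1 : v 1 = 0 := by
    have h1 : v (Matrix.det Mk) = v (Matrix.det Mk) + v 1 := by
      rw [← hvmul, mul_one]
    have h2 : v (Matrix.det Mk) + 0 = v (Matrix.det Mk) + v 1 := by
      rw [add_zero]; exact h1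
    exact (WithTop.add_left_cancel hv₀ne h2).symm
  have hvneg1 : v (-1) = 0 := by
    refine wt_self_add_eq_zero _ ?_
    rw [← hvmul, neg_one_mul, neg_neg, hv1]
  have hvneg : ∀ x : K, v (-x) = v x := by
    intro x
    rw [show -x = -1 * x by ring, hvmul, hvneg1, zero_add]
  -- ultrametric equality
  have veq : ∀ x y : K, v y < v (x - y) → v x = v y := by
    intro x y h
    have h1 : v y ≤ v x := by
      have := hvadd y (x - y)
      rw [show y + (x - y) = x by ring] at this
      exact le_trans (le_min (le_refl _) (le_of_lt h)) this
    rcases eq_or_lt_of_le h1 with heq | hlt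
    · exact heq.symm
    · exfalso
      have h2 := hvadd x (y - x)
      rw [show x + (y - x) = y by ring] at h2
      have h3 : v (y - x) = v (x - y) := by
        rw [show y - x = -(x - y) by ring, hvneg]
      rw [h3] at h2
      have : v y < v y := lt_of_lt_of_le (lt_min hlt h) h2
      exact lt_irrefl _ this
  -- strictly monotone maps landing in the first k indices are e₀
  have mono_lt_eq : ∀ t : Fin k → Fin n, StrictMono t → (∀ i, (t i : ℕ) < k) → t = e₀ := by
    intro t ht hlt
    set s : Finset (Fin n) := Finset.univ.image e₀ with hs
    have hcard : s.card = k := by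
      rw [hs, Finset.card_image_of_injective _ he₀mono.injective, Finset.card_univ,
        Fintype.card_fin]
    have hmem : ∀ x : Fin k, t x ∈ s := by
      intro x
      rw [hs, Finset.mem_image]
      exact ⟨⟨(t x : ℕ), hlt x⟩, Finset.mem_univ _, by
        apply Fin.ext
        rfl⟩
    have h1 : t = ⇑(s.orderEmbOfFin hcard) := Finset.orderEmbOfFin_unique hcard hmem ht
    have h2 : e₀ = ⇑(s.orderEmbOfFin hcard) :=
      Finset.orderEmbOfFin_unique hcard (fun x => by rw [hs, Finset.mem_image]; exact ⟨x, Finset.mem_univ _, rfl⟩) he₀mono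
    rw [h1, h2]
  -- the product matrices and the main diagonal product
  set D : ℕ → K := fun b => ∏ s ∈ Finset.range b, (g^s) (Matrix.det Mk) with hD
  have hDsucc : ∀ b : ℕ, D (b+1) = D b * (g^b) (Matrix.det Mk) :=
    fun b => Finset.prod_range_succ _ b
  have hD0 : D 0 = 1 := Finset.prod_range_zero _
  have hvD : ∀ b : ℕ, v (D b) = (((b:ℝ) * r₀ : ℝ) : WithTop ℝ) := by
    intro b
    induction b with
    | zero => rw [hD0, hv1]; simp
    | succ b ih =>
      rw [hDsucc, hvmul, ih, vg, hr₀, ← WithTop.coe_add]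
      congr 1
      push_cast
      ring
  set N : ℕ → Matrix (Fin n) (Fin n) K :=
    fun b => ((List.range b).map fun s => M.map ⇑(g ^ s)).reverse.prod with hN
  have hNsucc : ∀ b : ℕ, N (b+1) = (M.map ⇑(g^b)) * N b := by
    intro b
    rw [hN]
    simp [List.range_succ]
  have hN0 : N 0 = 1 := by rw [hN]; simp
  have hN1 : N 1 = M.map ⇑(g^0) := by rw [hNsucc 0, hN0, mul_one]
  -- the weight function
  set psi : (Fin k → Fin n) → ℝ := fun c => if ∀ i, (c i : ℕ) < k then 0 else r₀ - rA with hpsi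
  have hpsi_nonneg : ∀ c, 0 ≤ psi c := by
    intro c
    simp only [hpsi]
    split_ifs with h
    · exact le_refl _
    · linarith
  have hpsi_small : ∀ c : Fin k → Fin n, (∀ i, (c i : ℕ) < k) → psi c = 0 := by
    intro c hc
    simp only [hpsi]
    rw [if_pos hc]
  have hpsi_e₀ : psi e₀ = 0 := hpsi_small e₀ he₀lt
  have hpsi_big : ∀ c : Fin k → Fin n, (∃ i, k ≤ (c i : ℕ)) → psi c = r₀ - rA := by
    intro c hc
    simp only [hpsi]
    refine if_neg ?_
    intro h
    obtain ⟨i, hi⟩ := hc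
    exact absurd (h i) (not_lt.mpr hi)
  have he₀mem : e₀ ∈ monos k n := mem_monos.mpr he₀mono
  have herase_big : ∀ u ∈ (monos k n).erase e₀, ∃ i, k ≤ (u i : ℕ) := by
    intro u hu
    obtain ⟨hne, hmem⟩ := Finset.mem_erase.mp hu
    by_contra hcon
    push_neg at hcon
    exact hne (mono_lt_eq u (mem_monos.mp hmem) hcon)
  -- THE KEY INDUCTION
  have key : ∀ b : ℕ, ∀ t c : Fin k → Fin n, StrictMono t → StrictMono c →
      ((∀ i, (t i : ℕ) < k) → (∀ i, (c i : ℕ) < k) →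
        (((((b:ℝ)+1) * r₀ : ℝ)) : WithTop ℝ) < v (Matrix.det ((N (b+1)).submatrix t c) - D (b+1)))
      ∧ ((∀ i, (t i : ℕ) < k) → (∃ i, k ≤ (c i : ℕ)) →
        ((((b:ℝ) * r₀ + rA : ℝ)) : WithTop ℝ) ≤ v (Matrix.det ((N (b+1)).submatrix t c)))
      ∧ ((∃ i, k ≤ (t i : ℕ)) →
        (((((b:ℝ)+1) * r₀ + (r₀ - rA) - psi c : ℝ)) : WithTop ℝ)
          < v (Matrix.det ((N (b+1)).submatrix t c))) := by
    intro b
    induction b with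
    | zero =>
      intro t c hmt hmc
      refine ⟨?_, ?_, ?_⟩
      · intro hts hcs
        rw [mono_lt_eq t hmt hts, mono_lt_eq c hmc hcs]
        have hz : Matrix.det ((N 1).submatrix e₀ e₀) - D 1 = 0 := by
          rw [hN1, hdet 0 e₀ e₀, hMk', hDsucc 0, hD0, one_mul, sub_self]
        rw [hz, hv0]
        exact WithTop.coe_lt_top _
      · intro hts hcex
        rw [mono_lt_eq t hmt hts]
        have h1 : v (Matrix.det ((N 1).submatrix e₀ c)) = v (Matrix.det (M.submatrix e₀ c)) := by
          rw [hN1, hdet 0 e₀ c, vg]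
        rw [h1]
        refine le_trans (WithTop.coe_le_coe.mpr ?_) (hA_bound e₀ c he₀mono hmc he₀lt)
        push_cast
        linarith
      · intro htex
        have h1 : v (Matrix.det ((N 1).submatrix t c)) = v (Matrix.det (M.submatrix t c)) := by
          rw [hN1, hdet 0 t c, vg]
        rw [h1]
        refine lt_of_le_of_lt (WithTop.coe_le_coe.mpr ?_) (hB_bound t c hmt hmc htex)
        have := hpsi_nonneg c
        push_cast
        linarith
    | succ b ih =>
      intro t c hmt hmc
      have hexp : ∀ t' c' : Fin k → Fin n, Matrix.det ((N (b+2)).submatrix t' c')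
          = ∑ u ∈ monos k n,
            (g^(b+1)) (Matrix.det (M.submatrix t' u)) * Matrix.det ((N (b+1)).submatrix u c') := by
        intro t' c'
        rw [hNsucc (b+1), det_mul_submatrix]
        exact Finset.sum_congr rfl fun u _ => by rw [hdet]
      have hvg1 : ∀ x : K, v ((g^(b+1)) x) = v x := vg (b+1)
      refine ⟨?_, ?_, ?_⟩
      · -- part (a)
        intro hts hcs
        rw [mono_lt_eq t hmt hts, mono_lt_eq c hmc hcs]
        have hsplit : Matrix.det ((N (b+2)).submatrix e₀ e₀) - D (b+2)
            = ((g^(b+1)) (Matrix.det Mk) * (Matrix.det ((N (b+1)).submatrix e₀ e₀) - D (b+1)))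
              + ∑ u ∈ (monos k n).erase e₀,
                (g^(b+1)) (Matrix.det (M.submatrix e₀ u)) * Matrix.det ((N (b+1)).submatrix u e₀) := by
          rw [hexp e₀ e₀, ← Finset.add_sum_erase _ _ he₀mem, hMk', hDsucc (b+1)]
          ring
        rw [hsplit]
        have h1 : ((((b:ℝ)+1+1) * r₀ : ℝ) : WithTop ℝ)
            < v ((g^(b+1)) (Matrix.det Mk) * (Matrix.det ((N (b+1)).submatrix e₀ e₀) - D (b+1))) := by
          rw [hvmul, hvg1, hr₀]
          refine lt_of_le_of_lt (WithTop.coe_le_coe.mpr ?_)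
            (wt_lt_add_of_le_of_lt (le_refl _) ((ih e₀ e₀ he₀mono he₀mono).1 he₀lt he₀lt))
          push_cast
          linarith
        have h2 : ((((b:ℝ)+1+1) * r₀ : ℝ) : WithTop ℝ)
            < v (∑ u ∈ (monos k n).erase e₀,
              (g^(b+1)) (Matrix.det (M.submatrix e₀ u)) * Matrix.det ((N (b+1)).submatrix u e₀)) := by
          refine v_sum_lt v hv0 hvadd _ _ ?_
          intro u hu
          have humem : StrictMono u := mem_monos.mp (Finset.mem_erase.mp hu).2
          have hub := herase_big u hu
          rw [hvmul, hvg1]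
          refine lt_of_le_of_lt (WithTop.coe_le_coe.mpr ?_)
            (wt_lt_add_of_le_of_lt (hA_bound e₀ u he₀mono humem he₀lt)
              ((ih u e₀ humem he₀mono).2.2 hub))
          rw [hpsi_e₀]
          push_cast
          linarith
        refine lt_of_le_of_lt (WithTop.coe_le_coe.mpr (by push_cast; linarith))
          (lt_of_lt_of_le (lt_min h1 h2) (hvadd _ _))
      · -- part (b)
        intro hts hcex
        rw [mono_lt_eq t hmt hts, hexp e₀ c]
        refine v_sum_le v hv0 hvadd _ _ ?_
        intro u humem'
        have humem : StrictMono u := mem_monos.mp humem'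
        rw [hvmul, hvg1]
        by_cases hu : ∀ i, (u i : ℕ) < k
        · rw [mono_lt_eq u humem hu, hMk']
          have hfirst : v (Matrix.det Mk) = (r₀ : WithTop ℝ) := hr₀
          refine le_trans (WithTop.coe_le_coe.mpr ?_)
            (wt_le_add (le_of_eq hfirst.symm) ((ih e₀ c he₀mono hmc).2.1 he₀lt hcex))
          push_cast
          linarith
        · push_neg at hu
          refine le_trans (WithTop.coe_le_coe.mpr ?_)
            (le_of_lt (wt_lt_add_of_le_of_lt (hA_bound e₀ u he₀mono humem he₀lt)
              ((ih u c humem hmc).2.2 hu)))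
          rw [hpsi_big c hcex]
          push_cast
          linarith
      · -- part (c)
        intro htex
        rw [hexp t c]
        refine v_sum_lt v hv0 hvadd _ _ ?_
        intro u humem'
        have humem : StrictMono u := mem_monos.mp humem'
        rw [hvmul, hvg1]
        by_cases hu : ∀ i, (u i : ℕ) < k
        · rw [mono_lt_eq u humem hu]
          have hfirst : ((2*r₀ - rA : ℝ) : WithTop ℝ) < v (Matrix.det (M.submatrix t e₀)) :=
            hB_bound t e₀ hmt he₀mono htex
          by_cases hc : ∀ i, (c i : ℕ) < k
          · rw [mono_lt_eq c hmc hc]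
            have hmain : (((((b:ℝ)+1) * r₀) : ℝ) : WithTop ℝ)
                ≤ v (Matrix.det ((N (b+1)).submatrix e₀ e₀)) := by
              have hid : Matrix.det ((N (b+1)).submatrix e₀ e₀)
                  = D (b+1) + (Matrix.det ((N (b+1)).submatrix e₀ e₀) - D (b+1)) := by ring
              rw [hid]
              refine le_trans (le_min ?_ ?_) (hvadd _ _)
              · rw [hvD]
                exact WithTop.coe_le_coe.mpr (by push_cast; linarith)
              · exact le_of_lt ((ih e₀ e₀ he₀mono he₀mono).1 he₀lt he₀lt)
            refine lt_of_le_of_lt (WithTop.coe_le_coe.mpr ?_)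
              (wt_lt_add_of_lt_of_le hfirst hmain)
            rw [hpsi_e₀]
            push_cast
            linarith
          · push_neg at hc
            refine lt_of_le_of_lt (WithTop.coe_le_coe.mpr ?_)
              (wt_lt_add_of_lt_of_le hfirst ((ih e₀ c he₀mono hmc).2.1 he₀lt hc))
            rw [hpsi_big c hc]
            push_cast
            linarith
        · push_neg at hu
          have hfirst : ((2*r₀ - rA : ℝ) : WithTop ℝ) < v (Matrix.det (M.submatrix t u)) :=
            hB_bound t u hmt humem htex
          refine lt_of_le_of_lt (WithTop.coe_le_coe.mpr ?_)
            (wt_lt_add_of_lt_of_le hfirst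
              (le_of_lt ((ih u c humem hmc).2.2 hu)))
          have := hpsi_nonneg c
          push_cast
          linarith
  -- FINAL ASSEMBLY
  obtain ⟨b, rfl⟩ : ∃ b, a = b + 1 := ⟨a - 1, by omega⟩
  have hvm1pow : ∀ m : ℕ, v ((-1 : K)^m) = 0 := by
    intro m
    induction m with
    | zero => simpa using hv1
    | succ m ih => rw [pow_succ, hvmul, ih, hvneg1, add_zero]
  have hCk' : Ck = (-1 : K)^k * ∑ t ∈ monos k n, (((N (b+1)).submatrix t t)).det := by
    rw [hCk]
    exact coeff_det_one_sub (N (b+1)) k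
  set x₀ : K := Matrix.det ((N (b+1)).submatrix e₀ e₀) with hx₀
  have hvx₀ : v x₀ = (((((b:ℝ)+1) * r₀) : ℝ) : WithTop ℝ) := by
    have hvDb : v (D (b+1)) = (((((b:ℝ)+1) * r₀) : ℝ) : WithTop ℝ) := by
      rw [hvD (b+1)]
      congr 1
      push_cast
      ring
    have := veq x₀ (D (b+1)) (by
      rw [hvDb]
      exact (key b e₀ e₀ he₀mono he₀mono).1 he₀lt he₀lt)
    rw [this, hvDb]
  have hrest : ∀ u ∈ (monos k n).erase e₀,
      (((((b:ℝ)+1) * r₀) : ℝ) : WithTop ℝ) < v (Matrix.det ((N (b+1)).submatrix u u)) := by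
    intro u hu
    have humem : StrictMono u := mem_monos.mp (Finset.mem_erase.mp hu).2
    have hub := herase_big u hu
    refine lt_of_le_of_lt (WithTop.coe_le_coe.mpr ?_) ((key b u u humem humem).2.2 hub)
    rw [hpsi_big u hub]
    linarith
  have hsum : v (∑ t ∈ monos k n, (((N (b+1)).submatrix t t)).det)
      = (((((b:ℝ)+1) * r₀) : ℝ) : WithTop ℝ) := by
    have hsplit : (∑ t ∈ monos k n, (((N (b+1)).submatrix t t)).det)
        = x₀ + ∑ u ∈ (monos k n).erase e₀, (((N (b+1)).submatrix u u)).det :=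
      (Finset.add_sum_erase _ _ he₀mem).symm
    have hvrest : (((((b:ℝ)+1) * r₀) : ℝ) : WithTop ℝ)
        < v (∑ u ∈ (monos k n).erase e₀, (((N (b+1)).submatrix u u)).det) :=
      v_sum_lt v hv0 hvadd _ _ hrest
    have := veq (∑ t ∈ monos k n, (((N (b+1)).submatrix t t)).det) x₀ (by
      rw [hsplit, hvx₀]
      rw [show x₀ + (∑ u ∈ (monos k n).erase e₀, (((N (b+1)).submatrix u u)).det) - x₀
        = ∑ u ∈ (monos k n).erase e₀, (((N (b+1)).submatrix u u)).det by ring]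
      exact hvrest)
    rw [this, hvx₀]
  rw [hCk', hvmul, hvm1pow, zero_add, hsum, hr₀, wt_nsmul_coe]
  congr 1
  push_cast
  ring
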